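/- If P_1 ≪ P_0 and P_0 ≪ P_1 (the two measures are mutually absolutely continuous), then the marginally specified prior π_1 and the base prior π_0 are mutually absolutely continuous: π_1 ≪ π_0 and π_0 ≪ π_1. -/

import Mathlib

open MeasureTheory ProbabilityTheory
open scoped ENNReal

lemma bind_ac_of_ac {Θ F : Type*} [MeasurableSpace Θ] [MeasurableSpace F]
    {μ ν : Measure Θ} (κ : Kernel Θ F) (h : μ ≪ ν) :
    μ.bind κ ≪ ν.bind κ := by
  refine Measure.AbsolutelyContinuous.mk (fun s hs hνs => ?_)
  rw [Measure.bind_apply hs (κ.measurable.aemeasurable)] at hνs ⊢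
  have h0 : ∀ᵐ a ∂ν, κ a s = 0 :=
    (lintegral_eq_zero_iff (κ.measurable_coe hs)).mp hνs
  have h0' : ∀ᵐ a ∂μ, κ a s = 0 := h h0
  exact (lintegral_eq_zero_iff (κ.measurable_coe hs)).mpr h0'

/-- Corollary 1: if P₁ ≪ P₀ ≪ P₁ then π₁ ≪ π₀ ≪ π₁. -/
theorem msp_mutual_absolute_continuity
    {F Θ : Type*} [MeasurableSpace F] [MeasurableSpace Θ]
    (π₀ : Measure F) [IsProbabilityMeasure π₀]
    (θ : F → Θ) (hθ : Measurable θ)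
    (κ : Kernel Θ F) [IsMarkovKernel κ]
    (hdis : ∀ (A : Set F) (B : Set Θ), MeasurableSet A → MeasurableSet B →
      π₀ (A ∩ θ ⁻¹' B) = ∫⁻ t in B, κ t A ∂(π₀.map θ))
    (P₁ : Measure Θ) [IsProbabilityMeasure P₁]
    (h₁₀ : P₁ ≪ π₀.map θ) (h₀₁ : π₀.map θ ≪ P₁) :
    P₁.bind κ ≪ π₀ ∧ π₀ ≪ P₁.bind κ := by
  have hπ : π₀ = (π₀.map θ).bind κ := by
    ext s hs
    rw [Measure.bind_apply hs (κ.measurable.aemeasurable)]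
    have := hdis s Set.univ hs MeasurableSet.univ
    simpa [Set.preimage_univ, Set.inter_univ] using this
  constructor
  · calc P₁.bind κ ≪ (π₀.map θ).bind κ := bind_ac_of_ac κ h₁₀
      _ = π₀ := hπ.symm
  · calc π₀ = (π₀.map θ).bind κ := hπ
      _ ≪ P₁.bind κ := bind_ac_of_ac κ h₀₁
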